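/- Define κ : [-1,1] → ℝ by κ(t) = √(1/(2 − t²)), with L-fold iterate κ_L. Then for every integer L ≥ 1 and every t ∈ [-1,1], κ_L(t) = √( (L − (L−1)t²) / (L + 1 − L·t²) ); consequently, lim_{L→∞} L·(1 − κ_L(t)) = 1/2 if |t| < 1, and lim_{L→∞} L·(1 − κ_L(t)) = 0 if |t| = 1. -/

import Mathlib

open Filter Topology Set

/-- The kernel `κ(t) = √(1/(2−t²))`, i.e. `κ_γ` with `γ = 1` (sparse regime). -/
noncomputable def sparseGaussianKernel (t : ℝ) : ℝ := Real.sqrt (1 / (2 - t ^ 2))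

lemma kernel_formula : ∀ L : ℕ, 1 ≤ L → ∀ t ∈ Icc (-1 : ℝ) 1,
    sparseGaussianKernel^[L] t =
      Real.sqrt (((L : ℝ) - ((L : ℝ) - 1) * t ^ 2) / ((L : ℝ) + 1 - (L : ℝ) * t ^ 2)) := by
  intro L hL
  induction L, hL using Nat.le_induction with
  | base =>
    intro t ht
    simp [sparseGaussianKernel]
    norm_num
  | succ L hL ih =>
    intro t ht
    have ht2 : t ^ 2 ≤ 1 := by nlinarith [ht.1, ht.2]
    have ht0 : (0:ℝ) ≤ t ^ 2 := sq_nonneg t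
    have hL1 : (1:ℝ) ≤ (L:ℝ) := by exact_mod_cast hL
    have hN : (0:ℝ) ≤ (L:ℝ) - ((L:ℝ)-1) * t ^ 2 := by nlinarith
    have hD : (0:ℝ) < (L:ℝ) + 1 - (L:ℝ) * t ^ 2 := by nlinarith
    have hr : (0:ℝ) ≤ ((L:ℝ) - ((L:ℝ)-1) * t ^ 2) / ((L:ℝ)+1 - (L:ℝ)* t ^ 2) :=
      div_nonneg hN hD.le
    rw [Function.iterate_succ_apply', ih t ht, sparseGaussianKernel, Real.sq_sqrt hr]
    push_cast
    congr 1
    have h2 : (0:ℝ) < (L:ℝ) + 2 - ((L:ℝ)+1) * t ^ 2 := by nlinarith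
    have h2' : (2:ℝ) - ((L:ℝ) - ((L:ℝ)-1) * t ^ 2) / ((L:ℝ)+1 - (L:ℝ)* t ^ 2) ≠ 0 := by
      rw [sub_ne_zero]
      intro h
      have := (div_eq_iff hD.ne').mp h.symm
      nlinarith
    field_simp
    ring

/-- For `κ(t) = √(1/(2−t²))`, the `L`-fold iterate is
`κ_L(t) = √((L − (L−1)t²)/(L+1 − Lt²))`; consequently `L(1 − κ_L(t)) → 1/2` when `|t| < 1`
and `L(1 − κ_L(t)) → 0` when `|t| = 1`. -/
theorem sparse_gaussian_kernel_iterates :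
    (∀ L : ℕ, 1 ≤ L → ∀ t ∈ Icc (-1 : ℝ) 1,
      sparseGaussianKernel^[L] t =
        Real.sqrt (((L : ℝ) - ((L : ℝ) - 1) * t ^ 2) / ((L : ℝ) + 1 - (L : ℝ) * t ^ 2))) ∧
    (∀ t : ℝ, |t| < 1 →
      Tendsto (fun L : ℕ => (L : ℝ) * (1 - sparseGaussianKernel^[L] t)) atTop (𝓝 (1 / 2))) ∧
    (∀ t : ℝ, |t| = 1 →
      Tendsto (fun L : ℕ => (L : ℝ) * (1 - sparseGaussianKernel^[L] t)) atTop (𝓝 0)) := by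
  refine ⟨kernel_formula, ?_, ?_⟩
  · intro t ht
    have htm : t ∈ Icc (-1 : ℝ) 1 := ⟨by cases abs_lt.mp ht with | intro h1 h2 => linarith,
      by cases abs_lt.mp ht with | intro h1 h2 => linarith⟩
    have ht2 : t ^ 2 < 1 := by rw [← sq_abs]; nlinarith [abs_nonneg t]
    set u := t ^ 2 with hu
    have hu0 : (0:ℝ) ≤ u := sq_nonneg t
    set a := 1 - u with ha
    have ha0 : (0:ℝ) < a := by simp [ha]; linarith
    have h0 : Tendsto (fun L : ℕ => (1:ℝ)/(L:ℝ)) atTop (𝓝 0) :=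
      tendsto_one_div_atTop_nhds_zero_nat
    have hden : Tendsto (fun L : ℕ => a + 1/(L:ℝ)) atTop (𝓝 a) := by
      simpa using tendsto_const_nhds.add h0
    have hnum : Tendsto (fun L : ℕ => a + u/(L:ℝ)) atTop (𝓝 a) := by
      have hu' : Tendsto (fun L : ℕ => u/(L:ℝ)) atTop (𝓝 0) := by
        have := h0.const_mul u
        simpa [div_eq_mul_inv] using this
      simpa using tendsto_const_nhds.add hu'
    have hr : Tendsto (fun L : ℕ => (a + u/(L:ℝ))/(a + 1/(L:ℝ))) atTop (𝓝 1) := by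
      have := hnum.div hden ha0.ne'
      simpa [div_self ha0.ne', Pi.div_def] using this
    have hsq : Tendsto (fun L : ℕ => Real.sqrt ((a + u/(L:ℝ))/(a + 1/(L:ℝ)))) atTop (𝓝 1) := by
      have := hr.sqrt
      simpa using this
    have h1 : Tendsto (fun L : ℕ => a/(a + 1/(L:ℝ))) atTop (𝓝 1) := by
      have := (tendsto_const_nhds (x := a) (f := atTop (α := ℕ))).div hden ha0.ne'
      simpa [div_self ha0.ne', Pi.div_def] using this
    have h2 : Tendsto (fun L : ℕ => 1 + Real.sqrt ((a + u/(L:ℝ))/(a + 1/(L:ℝ)))) atTop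
        (𝓝 2) := by
      have h := (tendsto_const_nhds (x := (1:ℝ)) (f := atTop (α := ℕ))).add hsq
      rw [show (1:ℝ)+1 = 2 by norm_num] at h
      exact h
    have hmain := h1.div h2 (by norm_num : (2:ℝ) ≠ 0)
    refine hmain.congr' ?_
    filter_upwards [eventually_ge_atTop 1] with L hL
    simp only [Pi.div_apply]
    have hLpos : (0:ℝ) < (L:ℝ) := by exact_mod_cast hL
    have hL1 : (1:ℝ) ≤ (L:ℝ) := by exact_mod_cast hL
    have hdpos : (0:ℝ) < a + 1/(L:ℝ) := by positivity
    have hnn : (0:ℝ) ≤ a + u/(L:ℝ) := by positivity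
    have hrat0 : (0:ℝ) ≤ (a + u/(L:ℝ))/(a + 1/(L:ℝ)) := div_nonneg hnn hdpos.le
    have key : ((L:ℝ) - ((L:ℝ)-1)*u)/((L:ℝ)+1-(L:ℝ)*u) = (a + u/(L:ℝ))/(a + 1/(L:ℝ)) := by
      have hD : (0:ℝ) < (L:ℝ)+1-(L:ℝ)*u := by nlinarith
      rw [ha]
      rw [div_eq_div_iff hD.ne' (by rw [← ha]; exact hdpos.ne')]
      field_simp
      ring
    rw [kernel_formula L hL t htm, key]
    set s := Real.sqrt ((a + u/(L:ℝ))/(a + 1/(L:ℝ))) with hs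
    have hs0 : (0:ℝ) ≤ s := Real.sqrt_nonneg _
    have hs2 : s^2 = (a + u/(L:ℝ))/(a + 1/(L:ℝ)) := Real.sq_sqrt hrat0
    rw [div_eq_iff (by positivity : (1:ℝ)+s ≠ 0),
      show (L:ℝ)*(1-s)*(1+s) = (L:ℝ)*(1 - s^2) by ring, hs2]
    field_simp
    ring
  · intro t ht
    have htm : t ∈ Icc (-1 : ℝ) 1 := by
      constructor <;> [nlinarith [abs_le.mp ht.le]; nlinarith [(abs_le.mp ht.le).2]]
    have ht2 : t ^ 2 = 1 := by rw [← sq_abs, ht]; norm_num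
    have : Tendsto (fun _ : ℕ => (0:ℝ)) atTop (𝓝 0) := tendsto_const_nhds
    refine this.congr' ?_
    filter_upwards [eventually_ge_atTop 1] with L hL
    rw [kernel_formula L hL t htm, ht2]
    have : ((L:ℝ) - ((L:ℝ)-1)*1)/((L:ℝ)+1-(L:ℝ)*1) = 1 := by ring_nf
    rw [this, Real.sqrt_one]
    ring
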